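/- Let (X,d) be a metric space, a ≤ b reals, and γ : [a,b] → X of bounded variation that is right-continuous on [a,b) and such that for every t ∈ (a,b] there exists a point γ(t⁻) ∈ X with γ(s) → γ(t⁻) as s → t from the left within [a,t). Then the closure of γ([a,b]) equals γ([a,b]) ∪ { γ(t⁻) : t ∈ (a,b] }, and this closure is a compact subset of X. -/
import Mathlib

open Filter Set Topology

lemma stmt10_key {X : Type*} [MetricSpace X] {a b : ℝ}
    (γ : ℝ → X)
    (hrc : ∀ t ∈ Set.Ico a b,
      Filter.Tendsto γ (nhdsWithin t (Set.Ioc t b)) (nhds (γ t)))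
    (γm : ℝ → X)
    (hlim : ∀ t ∈ Set.Ioc a b,
      Filter.Tendsto γ (nhdsWithin t (Set.Ico a t)) (nhds (γm t)))
    (t : ℕ → ℝ) (ht : ∀ n, t n ∈ Set.Icc a b) :
    ∃ φ : ℕ → ℕ, StrictMono φ ∧ ∃ x ∈ γ '' Set.Icc a b ∪ γm '' Set.Ioc a b,
      Filter.Tendsto (fun n => γ (t (φ n))) Filter.atTop (nhds x) := by
  obtain ⟨l, hl, ψ, hψ, hconv⟩ := isCompact_Icc.tendsto_subseq ht
  by_cases h1 : ∃ᶠ n in atTop, t (ψ n) = l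
  · obtain ⟨χ, hχ, hval⟩ := extraction_of_frequently_atTop h1
    refine ⟨ψ ∘ χ, hψ.comp hχ, γ l, Or.inl ⟨l, hl, rfl⟩, ?_⟩
    exact Tendsto.congr (fun n => (congrArg γ (hval n)).symm) tendsto_const_nhds
  by_cases h2 : ∃ᶠ n in atTop, t (ψ n) < l
  · obtain ⟨χ, hχ, hval⟩ := extraction_of_frequently_atTop h2
    have hla : a < l := lt_of_le_of_lt (ht (ψ (χ 0))).1 (hval 0)
    refine ⟨ψ ∘ χ, hψ.comp hχ, γm l, Or.inr ⟨l, ⟨hla, hl.2⟩, rfl⟩, ?_⟩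
    refine (hlim l ⟨hla, hl.2⟩).comp ?_
    refine tendsto_nhdsWithin_of_tendsto_nhds_of_eventually_within _
      (hconv.comp hχ.tendsto_atTop) (Eventually.of_forall fun n => ⟨(ht _).1, hval n⟩)
  · have h3 : ∀ᶠ n in atTop, l < t (ψ n) := by
      have e1 := not_frequently.mp h1
      have e2 := not_frequently.mp h2
      filter_upwards [e1, e2] with n hn1 hn2
      rcases lt_trichotomy (t (ψ n)) l with h | h | h
      · exact absurd h hn2
      · exact absurd h hn1
      · exact h
    obtain ⟨χ, hχ, hval⟩ := extraction_of_frequently_atTop h3.frequently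
    have hlb : l < b := lt_of_lt_of_le (hval 0) (ht (ψ (χ 0))).2
    refine ⟨ψ ∘ χ, hψ.comp hχ, γ l, Or.inl ⟨l, hl, rfl⟩, ?_⟩
    refine (hrc l ⟨hl.1, hlb⟩).comp ?_
    refine tendsto_nhdsWithin_of_tendsto_nhds_of_eventually_within _
      (hconv.comp hχ.tendsto_atTop) (Eventually.of_forall fun n => ⟨hval n, (ht _).2⟩)


/-- For a right-continuous function of bounded variation on
`[a,b]` whose left limits `γ(t⁻)` exist at every `t ∈ (a,b]`, the closure of
the image equals the image together with the left limits, and this closure is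
compact. -/
theorem stmt10 {X : Type*} [MetricSpace X] {a b : ℝ} (hab : a ≤ b)
    (γ : ℝ → X) (hγ : BoundedVariationOn γ (Set.Icc a b))
    (hrc : ∀ t ∈ Set.Ico a b,
      Filter.Tendsto γ (nhdsWithin t (Set.Ioc t b)) (nhds (γ t)))
    (γm : ℝ → X)
    (hlim : ∀ t ∈ Set.Ioc a b,
      Filter.Tendsto γ (nhdsWithin t (Set.Ico a t)) (nhds (γm t))) :
    closure (γ '' Set.Icc a b) = γ '' Set.Icc a b ∪ γm '' Set.Ioc a b ∧
      IsCompact (closure (γ '' Set.Icc a b)) := by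
  have hS : γ '' Set.Icc a b ∪ γm '' Set.Ioc a b ⊆ closure (γ '' Set.Icc a b) := by
    rintro x (hx | ⟨s, hs, rfl⟩)
    · exact subset_closure hx
    · have hne : (nhdsWithin s (Set.Ico a s)).NeBot := by
        refine mem_closure_iff_nhdsWithin_neBot.mp ?_
        rw [closure_Ico (ne_of_lt hs.1)]
        exact ⟨le_of_lt hs.1, le_refl s⟩
      refine mem_closure_of_tendsto (hlim s hs) ?_
      filter_upwards [self_mem_nhdsWithin] with y hy
      exact ⟨y, ⟨hy.1, le_trans (le_of_lt hy.2) hs.2⟩, rfl⟩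
  have hsub : closure (γ '' Set.Icc a b) ⊆ γ '' Set.Icc a b ∪ γm '' Set.Ioc a b := by
    intro x hx
    obtain ⟨u, hu, hux⟩ := mem_closure_iff_seq_limit.mp hx
    choose t ht hγt using hu
    obtain ⟨φ, hφ, x', hx', hconv⟩ := stmt10_key γ hrc γm hlim t ht
    have h2 : Filter.Tendsto (fun n => γ (t (φ n))) Filter.atTop (nhds x) :=
      (hux.comp hφ.tendsto_atTop).congr fun n => (hγt (φ n)).symm
    rwa [tendsto_nhds_unique h2 hconv]
  have hseq : IsSeqCompact (closure (γ '' Set.Icc a b)) := by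
    intro u hu
    have key : ∀ n : ℕ, ∃ s ∈ Set.Icc a b, dist (u n) (γ s) < 1/(n+1) := by
      intro n
      obtain ⟨y, hy, hd⟩ := Metric.mem_closure_iff.mp (hu n) (1/(n+1)) (by positivity)
      obtain ⟨s, hs, rfl⟩ := hy
      exact ⟨s, hs, hd⟩
    choose t ht hd using key
    obtain ⟨φ, hφ, x', hx', hconv⟩ := stmt10_key γ hrc γm hlim t ht
    refine ⟨x', hS hx', φ, hφ, ?_⟩
    refine hconv.congr_dist ?_
    refine squeeze_zero (fun n => dist_nonneg) (fun n => ?_)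
      tendsto_one_div_add_atTop_nhds_zero_nat
    rw [dist_comm]
    refine le_trans (le_of_lt (hd (φ n))) ?_
    apply one_div_le_one_div_of_le (by positivity)
    have : (n : ℝ) ≤ φ n := Nat.cast_le.mpr (hφ.le_apply)
    linarith
  exact ⟨Set.Subset.antisymm hsub hS, hseq.isCompact⟩
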